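/- arXiv:1902.03903 — 3 statements merged into one kernel-verified Lean document; each statement's English description precedes it below -/
import Mathlib

section
/- Let n ≥ 1, N = 2n+2, and define the phonon coordinates of a point (q, p) ∈ ℝ^{2N} by, for 1 ≤ j < N/2, Q_j = √(2/N) Σ_{k=1}^N cos(2kjπ/N) q_k, Q_{N−j} = √(2/N) Σ_{k=1}^N sin(2kjπ/N) q_k, Q_{N/2} = (1/√N) Σ_{k=1}^N (−1)^k q_k, Q_N = (1/√N) Σ_{k=1}^N q_k, and the same formulas for P in terms of p. Let S : ℝ^{2N} → ℝ^{2N} be the linear map S(q, p)_j = (−q_{N−j}, −p_{N−j}) for 1 ≤ j ≤ N−1, S(q, p)_N = (−q_N, −p_N). Then in phonon coordinates S acts by Q_k ↦ −Q_k, P_k ↦ −P_k for 1 ≤ k ≤ n+1 and k = 2n+2, and by Q_k ↦ Q_k, P_k ↦ P_k for n+2 ≤ k ≤ 2n+1. -/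
noncomputable section

open Finset

/-- The coordinate with (1-based) label `j` is the component `(j−1) mod N` of `Fin N`. -/
def co (N : ℕ) (hN : 0 < N) (j : ℕ) : Fin N := ⟨(j - 1) % N, Nat.mod_lt _ hN⟩

/-- The phonon coordinate with label `j` (`1 ≤ j ≤ N`) of a vector `q ∈ ℝ^N`:
for `1 ≤ j < N/2` it is `√(2/N) Σ_{k=1}^N cos(2kjπ/N) q_k`; the label `N − j`
(`1 ≤ j < N/2`) gives `√(2/N) Σ_{k=1}^N sin(2kjπ/N) q_k`; label `N/2` gives
`(1/√N) Σ_{k=1}^N (−1)^k q_k`; label `N` gives `(1/√N) Σ_{k=1}^N q_k`. -/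
def phon (N : ℕ) (hN : 0 < N) (j : ℕ) (q : Fin N → ℝ) : ℝ :=
  if 2 * j < N then
    Real.sqrt (2 / N) * ∑ k ∈ Finset.Icc 1 N, Real.cos (2 * k * j * Real.pi / N) * q (co N hN k)
  else if j = N then
    (1 / Real.sqrt N) * ∑ k ∈ Finset.Icc 1 N, q (co N hN k)
  else if 2 * j = N then
    (1 / Real.sqrt N) * ∑ k ∈ Finset.Icc 1 N, (-1 : ℝ) ^ k * q (co N hN k)
  else
    Real.sqrt (2 / N) *
      ∑ k ∈ Finset.Icc 1 N, Real.sin (2 * k * (N - j) * Real.pi / N) * q (co N hN k)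

/-- The reversal-with-sign-flip `S : (q,p)_j ↦ (−q_{N−j}, −p_{N−j})`
(`S(q,p)_N = (−q_N, −p_N)`); in 0-based components `i ↦ (2N−2−i) mod N`. -/
def Smap (N : ℕ) (hN : 0 < N) (x : (Fin N → ℝ) × (Fin N → ℝ)) :
    (Fin N → ℝ) × (Fin N → ℝ) :=
  (fun i => - x.1 (⟨(2 * N - 2 - (i : ℕ)) % N, Nat.mod_lt _ hN⟩ : Fin N),
   fun i => - x.2 (⟨(2 * N - 2 - (i : ℕ)) % N, Nat.mod_lt _ hN⟩ : Fin N))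

/-- The label involution `k ↦ N − k` (fixing `N`). -/
def gg (N k : ℕ) : ℕ := if k = N then N else N - k

lemma gg_mem {N k : ℕ} (hk : k ∈ Finset.Icc 1 N) : gg N k ∈ Finset.Icc 1 N := by
  simp only [Finset.mem_Icc] at *
  unfold gg; split_ifs <;> omega

lemma gg_gg {N k : ℕ} (hk : k ∈ Finset.Icc 1 N) : gg N (gg N k) = k := by
  simp only [Finset.mem_Icc] at hk
  unfold gg; split_ifs <;> omega

lemma idx_eq (N : ℕ) (hN : 0 < N) (k : ℕ) (hk : k ∈ Finset.Icc 1 N) :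
    (⟨(2 * N - 2 - ((co N hN k : Fin N) : ℕ)) % N, Nat.mod_lt _ hN⟩ : Fin N)
      = co N hN (gg N k) := by
  simp only [Finset.mem_Icc] at hk
  apply Fin.ext
  simp only [co, gg]
  have hk1 : (k - 1) % N = k - 1 := Nat.mod_eq_of_lt (by omega)
  rw [hk1]
  by_cases h : k = N
  · rw [if_pos h, h]
    congr 1
    omega
  · rw [if_neg h]
    have h3 : 2 * N - 2 - (k - 1) = N + (N - 1 - k) := by omega
    rw [h3, Nat.add_mod_left, Nat.mod_eq_of_lt (by omega), Nat.mod_eq_of_lt (by omega)]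
    omega

lemma sum_gg (N : ℕ) (F : ℕ → ℝ) :
    ∑ k ∈ Finset.Icc 1 N, F (gg N k) = ∑ k ∈ Finset.Icc 1 N, F k := by
  refine Finset.sum_nbij' (fun k => gg N k) (fun k => gg N k)
    (fun a ha => gg_mem ha) (fun a ha => gg_mem ha)
    (fun a ha => gg_gg ha) (fun a ha => gg_gg ha) (fun a ha => rfl)

lemma sum_smap_eq (N : ℕ) (hN : 0 < N) (f : ℕ → ℝ) (q : Fin N → ℝ) (ε : ℝ)
    (hf : ∀ k ∈ Finset.Icc 1 N, f (gg N k) = ε * f k) :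
    ∑ k ∈ Finset.Icc 1 N, f k * q (co N hN (gg N k))
      = ε * ∑ k ∈ Finset.Icc 1 N, f k * q (co N hN k) := by
  rw [Finset.mul_sum]
  calc ∑ k ∈ Finset.Icc 1 N, f k * q (co N hN (gg N k))
      = ∑ k ∈ Finset.Icc 1 N, (fun m => f (gg N m) * q (co N hN m)) (gg N k) := by
        refine Finset.sum_congr rfl fun k hk => ?_
        simp only [gg_gg hk]
    _ = ∑ k ∈ Finset.Icc 1 N, f (gg N k) * q (co N hN k) :=
        sum_gg N (fun m => f (gg N m) * q (co N hN m))
    _ = ∑ k ∈ Finset.Icc 1 N, ε * (f k * q (co N hN k)) := by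
        refine Finset.sum_congr rfl fun k hk => ?_
        rw [hf k hk]; ring

lemma cos_two_pi_int (j : ℤ) : Real.cos ((j : ℝ) * (2 * Real.pi)) = 1 :=
  Real.cos_int_mul_two_pi j

lemma sin_two_pi_int (j : ℤ) : Real.sin ((j : ℝ) * (2 * Real.pi)) = 0 := by
  have := Real.sin_int_mul_pi (2 * j)
  push_cast at this
  convert this using 2
  ring

lemma hf_cos (N j : ℕ) (hN : 0 < N) :
    ∀ k ∈ Finset.Icc 1 N,
      Real.cos (2 * (gg N k : ℝ) * j * Real.pi / N)
        = 1 * Real.cos (2 * (k : ℝ) * j * Real.pi / N) := by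
  intro k hk
  simp only [Finset.mem_Icc] at hk
  rw [one_mul]
  unfold gg
  by_cases h : k = N
  · rw [if_pos h, h]
  · rw [if_neg h]
    have hNR : (N : ℝ) ≠ 0 := Nat.cast_ne_zero.mpr hN.ne'
    have hcast : ((N - k : ℕ) : ℝ) = (N : ℝ) - k := by
      push_cast [hk.2]; ring
    rw [hcast]
    have harg : 2 * ((N : ℝ) - k) * j * Real.pi / N
        = ((j : ℤ) : ℝ) * (2 * Real.pi) - 2 * (k : ℝ) * j * Real.pi / N := by
      push_cast
      field_simp
    rw [harg, Real.cos_sub, cos_two_pi_int, sin_two_pi_int]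
    ring

lemma hf_sin (N : ℕ) (m : ℤ) (hN : 0 < N) :
    ∀ k ∈ Finset.Icc 1 N,
      Real.sin (2 * (gg N k : ℝ) * (m : ℝ) * Real.pi / N)
        = (-1) * Real.sin (2 * (k : ℝ) * (m : ℝ) * Real.pi / N) := by
  intro k hk
  simp only [Finset.mem_Icc] at hk
  have hNR : (N : ℝ) ≠ 0 := Nat.cast_ne_zero.mpr hN.ne'
  unfold gg
  by_cases h : k = N
  · rw [if_pos h, h]
    have harg : 2 * (N : ℝ) * (m : ℝ) * Real.pi / N = (m : ℝ) * (2 * Real.pi) := by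
      field_simp
    rw [harg, sin_two_pi_int]; ring
  · rw [if_neg h]
    have hcast : ((N - k : ℕ) : ℝ) = (N : ℝ) - k := by
      push_cast [hk.2]; ring
    rw [hcast]
    have harg : 2 * ((N : ℝ) - k) * (m : ℝ) * Real.pi / N
        = (m : ℝ) * (2 * Real.pi) - 2 * (k : ℝ) * (m : ℝ) * Real.pi / N := by
      field_simp
    rw [harg, Real.sin_sub, cos_two_pi_int, sin_two_pi_int]
    ring

lemma hf_neg_one (N : ℕ) (hNe : Even N) :
    ∀ k ∈ Finset.Icc 1 N, ((-1 : ℝ)) ^ (gg N k) = 1 * ((-1 : ℝ)) ^ k := by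
  intro k hk
  simp only [Finset.mem_Icc] at hk
  rw [one_mul]
  unfold gg
  by_cases h : k = N
  · rw [if_pos h, h]
  · rw [if_neg h]
    rcases Nat.even_or_odd k with he | ho
    · rw [((Nat.even_sub hk.2).mpr (iff_of_true hNe he)).neg_one_pow, he.neg_one_pow]
    · rw [(Nat.Even.sub_odd hk.2 hNe ho).neg_one_pow, ho.neg_one_pow]

/-- How `S` acts on a single phonon coordinate. -/
lemma phon_smap (N : ℕ) (hN : 0 < N) (hNe : Even N) (j : ℕ) (q Sq : Fin N → ℝ)
    (hSq : ∀ i, Sq i = - q (⟨(2 * N - 2 - (i : ℕ)) % N, Nat.mod_lt _ hN⟩ : Fin N)) :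
    phon N hN j Sq = (if N < 2 * j ∧ j ≠ N then 1 else -1) * phon N hN j q := by
  have key : ∀ k ∈ Finset.Icc 1 N, Sq (co N hN k) = - q (co N hN (gg N k)) := by
    intro k hk
    rw [hSq, idx_eq N hN k hk]
  by_cases h1 : 2 * j < N
  · have hs : ¬ (N < 2 * j ∧ j ≠ N) := by omega
    rw [phon, phon, if_pos h1, if_pos h1, if_neg hs]
    rw [Finset.sum_congr rfl (fun k hk => by rw [key k hk] :
      ∀ k ∈ Finset.Icc 1 N,
        Real.cos (2 * (k : ℝ) * j * Real.pi / N) * Sq (co N hN k)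
          = Real.cos (2 * (k : ℝ) * j * Real.pi / N) * (- q (co N hN (gg N k))))]
    simp only [mul_neg]
    rw [Finset.sum_neg_distrib,
      sum_smap_eq N hN (fun k => Real.cos (2 * (k : ℝ) * j * Real.pi / N)) q 1
        (hf_cos N j hN)]
    ring
  · by_cases h2 : j = N
    · have hs : ¬ (N < 2 * j ∧ j ≠ N) := by omega
      rw [phon, phon, if_neg h1, if_neg h1, if_pos h2, if_pos h2, if_neg hs]
      rw [Finset.sum_congr rfl key]
      rw [Finset.sum_neg_distrib,
        show (∑ k ∈ Finset.Icc 1 N, q (co N hN (gg N k)))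
            = ∑ k ∈ Finset.Icc 1 N, q (co N hN k) from sum_gg N (fun m => q (co N hN m))]
      ring
    · by_cases h3 : 2 * j = N
      · have hs : ¬ (N < 2 * j ∧ j ≠ N) := by omega
        rw [phon, phon, if_neg h1, if_neg h1, if_neg h2, if_neg h2, if_pos h3, if_pos h3,
          if_neg hs]
        rw [Finset.sum_congr rfl (fun k hk => by rw [key k hk] :
          ∀ k ∈ Finset.Icc 1 N,
            ((-1 : ℝ)) ^ k * Sq (co N hN k)
              = ((-1 : ℝ)) ^ k * (- q (co N hN (gg N k))))]
        simp only [mul_neg]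
        rw [Finset.sum_neg_distrib,
          sum_smap_eq N hN (fun k => ((-1 : ℝ)) ^ k) q 1 (hf_neg_one N hNe)]
        ring
      · have hs : N < 2 * j ∧ j ≠ N := by omega
        rw [phon, phon, if_neg h1, if_neg h1, if_neg h2, if_neg h2, if_neg h3, if_neg h3,
          if_pos hs]
        have hm : ((N : ℝ) - (j : ℝ)) = (((N : ℤ) - (j : ℤ) : ℤ) : ℝ) := by push_cast; ring
        simp only [hm]
        rw [Finset.sum_congr rfl (fun k hk => by rw [key k hk] :
          ∀ k ∈ Finset.Icc 1 N,
            Real.sin (2 * (k : ℝ) * (((N : ℤ) - (j : ℤ) : ℤ) : ℝ) * Real.pi / N)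
                * Sq (co N hN k)
              = Real.sin (2 * (k : ℝ) * (((N : ℤ) - (j : ℤ) : ℤ) : ℝ) * Real.pi / N)
                  * (- q (co N hN (gg N k))))]
        simp only [mul_neg]
        rw [Finset.sum_neg_distrib,
          sum_smap_eq N hN
            (fun k => Real.sin (2 * (k : ℝ) * (((N : ℤ) - (j : ℤ) : ℤ) : ℝ) * Real.pi / N))
            q (-1) (hf_sin N ((N : ℤ) - (j : ℤ)) hN)]
        ring

/-- Let `n ≥ 1`, `N = 2n+2`.  In phonon coordinates the symmetry `S`
acts by `Q_k ↦ −Q_k`, `P_k ↦ −P_k` for `1 ≤ k ≤ n+1` and `k = 2n+2`, and by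
`Q_k ↦ Q_k`, `P_k ↦ P_k` for `n+2 ≤ k ≤ 2n+1`. -/
theorem S_action_on_phonons (n : ℕ) (hn : 1 ≤ n) (hN0 : 0 < 2 * n + 2)
    (x : (Fin (2 * n + 2) → ℝ) × (Fin (2 * n + 2) → ℝ)) :
    (∀ k, 1 ≤ k → k ≤ n + 1 →
      phon (2 * n + 2) hN0 k ((Smap (2 * n + 2) hN0 x).1) = - phon (2 * n + 2) hN0 k x.1 ∧
      phon (2 * n + 2) hN0 k ((Smap (2 * n + 2) hN0 x).2) = - phon (2 * n + 2) hN0 k x.2) ∧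
    (phon (2 * n + 2) hN0 (2 * n + 2) ((Smap (2 * n + 2) hN0 x).1)
        = - phon (2 * n + 2) hN0 (2 * n + 2) x.1 ∧
      phon (2 * n + 2) hN0 (2 * n + 2) ((Smap (2 * n + 2) hN0 x).2)
        = - phon (2 * n + 2) hN0 (2 * n + 2) x.2) ∧
    (∀ k, n + 2 ≤ k → k ≤ 2 * n + 1 →
      phon (2 * n + 2) hN0 k ((Smap (2 * n + 2) hN0 x).1) = phon (2 * n + 2) hN0 k x.1 ∧
      phon (2 * n + 2) hN0 k ((Smap (2 * n + 2) hN0 x).2) = phon (2 * n + 2) hN0 k x.2) := by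
  have hNe : Even (2 * n + 2) := ⟨n + 1, by ring⟩
  have h1 : ∀ j : ℕ, phon (2 * n + 2) hN0 j ((Smap (2 * n + 2) hN0 x).1)
      = (if 2 * n + 2 < 2 * j ∧ j ≠ 2 * n + 2 then 1 else -1) * phon (2 * n + 2) hN0 j x.1 :=
    fun j => phon_smap (2 * n + 2) hN0 hNe j x.1 _ (fun i => rfl)
  have h2 : ∀ j : ℕ, phon (2 * n + 2) hN0 j ((Smap (2 * n + 2) hN0 x).2)
      = (if 2 * n + 2 < 2 * j ∧ j ≠ 2 * n + 2 then 1 else -1) * phon (2 * n + 2) hN0 j x.2 :=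
    fun j => phon_smap (2 * n + 2) hN0 hNe j x.2 _ (fun i => rfl)
  refine ⟨fun k hk1 hk2 => ?_, ?_, fun k hk1 hk2 => ?_⟩
  · have hs : ¬ (2 * n + 2 < 2 * k ∧ k ≠ 2 * n + 2) := by omega
    rw [h1 k, h2 k, if_neg hs]
    constructor <;> ring
  · have hs : ¬ (2 * n + 2 < 2 * (2 * n + 2) ∧ 2 * n + 2 ≠ 2 * n + 2) := by omega
    rw [h1 (2 * n + 2), h2 (2 * n + 2), if_neg hs]
    constructor <;> ring
  · have hs : 2 * n + 2 < 2 * k ∧ k ≠ 2 * n + 2 := by omega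
    rw [h1 k, h2 k, if_pos hs]
    constructor <;> ring

end
end

section
/- Let n ≥ 1, N = 2n+2, β ∈ ℝ, and ω_k = √(1 + 4 sin²(kπ/N)) for 1 ≤ k ≤ N. In the fourth-order normal form H̄₄ of the periodic KG lattice with N particles, H̄₄ = (β/(2N)) [ (3/2)(a_{N/2}²/ω_{N/2}² + a_N²/ω_N²) + 6 a_{N/2} a_N/(ω_{N/2} ω_N) + 6 (a_{N/2}/ω_{N/2} + a_N/ω_N) Σ_{1≤k<N/2} a_k/ω_k + (3/4) Σ_{1≤k<N/2} (3a_k² − b_k²)/ω_k² + 6 Σ_{1≤k<l<N/2} a_k a_l/(ω_k ω_l) + 3 Σ_{1≤k<N/4} (c_k c_{N/2−k} − d_k d_{N/2−k})/(ω_k ω_{N/2−k}) + (3/4)(c_{N/4}² − d_{N/4}²)/ω_{N/4}² ] (the N/4 terms present only when 4 | N), substitute a_k = I_k, b_k = 0, c_k = −I_k, d_k = 0 for 1 ≤ k ≤ n, and a_{N/2} = a_N = 0. The result equals, as a polynomial identity in the variables I_1, …, I_n, the expression (β/(2(2n+2))) [ (9/4) Σ_{k=1}^n I_k²/ω_k²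 + 6 Σ_{1≤k<l≤n} I_k I_l/(ω_k ω_l) + 3 Σ_{1≤k<(n+1)/2} I_k I_{n+1−k}/(ω_k ω_{n+1−k}) + (3/4) I_{(n+1)/2}²/ω_{(n+1)/2}² ], where the last term is present only when n is odd. -/
noncomputable section

open Finset

/-- The normal-mode frequencies `ω_k = √(1 + 4 sin²(kπ/N))`. -/
def omg (N k : ℕ) : ℝ := Real.sqrt (1 + 4 * Real.sin (k * Real.pi / N) ^ 2)

/-- Let `n ≥ 1`, `N = 2n+2`.  Substituting `a_k = I_k`, `b_k = 0`,
`c_k = −I_k`, `d_k = 0` (`1 ≤ k ≤ n`) and `a_{N/2} = a_N = 0` into the fourth-order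
normal form `H̄₄` of the periodic KG lattice with `N` particles yields, as a polynomial
identity in `I_1, …, I_n`, the fourth-order normal form of the KG lattice with `n`
particles and fixed endpoints. -/
theorem restriction_of_normal_form_to_fixed_endpoints (n : ℕ) (hn : 1 ≤ n) (β : ℝ)
    (I : ℕ → ℝ) :
    (β / (2 * (2 * n + 2 : ℕ)) *
      ((3 / 2) * ((0 : ℝ) ^ 2 / omg (2 * n + 2) ((2 * n + 2) / 2) ^ 2
          + (0 : ℝ) ^ 2 / omg (2 * n + 2) (2 * n + 2) ^ 2)
        + 6 * (0 : ℝ) * (0 : ℝ) / (omg (2 * n + 2) ((2 * n + 2) / 2) * omg (2 * n + 2) (2 * n + 2))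
        + 6 * ((0 : ℝ) / omg (2 * n + 2) ((2 * n + 2) / 2) + (0 : ℝ) / omg (2 * n + 2) (2 * n + 2)) *
            ∑ k ∈ Finset.Ico 1 ((2 * n + 2) / 2), I k / omg (2 * n + 2) k
        + (3 / 4) * ∑ k ∈ Finset.Ico 1 ((2 * n + 2) / 2),
            (3 * I k ^ 2 - (0 : ℝ) ^ 2) / omg (2 * n + 2) k ^ 2
        + 6 * ∑ k ∈ Finset.Ico 1 ((2 * n + 2) / 2), ∑ l ∈ Finset.Ico (k + 1) ((2 * n + 2) / 2),
            I k * I l / (omg (2 * n + 2) k * omg (2 * n + 2) l)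
        + 3 * ∑ k ∈ (Finset.Ico 1 ((2 * n + 2) / 2)).filter (fun k => 4 * k < 2 * n + 2),
            ((- I k) * (- I ((2 * n + 2) / 2 - k)) - (0 : ℝ) * (0 : ℝ))
              / (omg (2 * n + 2) k * omg (2 * n + 2) ((2 * n + 2) / 2 - k))
        + (if (2 * n + 2) % 4 = 0 then
            (3 / 4) * ((- I ((2 * n + 2) / 4)) ^ 2 - (0 : ℝ) ^ 2)
              / omg (2 * n + 2) ((2 * n + 2) / 4) ^ 2
          else 0))) =
    β / (2 * (2 * n + 2 : ℕ)) *
      ((9 / 4) * ∑ k ∈ Finset.Icc 1 n, I k ^ 2 / omg (2 * n + 2) k ^ 2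
        + 6 * ∑ k ∈ Finset.Icc 1 n, ∑ l ∈ Finset.Icc (k + 1) n,
            I k * I l / (omg (2 * n + 2) k * omg (2 * n + 2) l)
        + 3 * ∑ k ∈ (Finset.Icc 1 n).filter (fun k => 2 * k < n + 1),
            I k * I (n + 1 - k) / (omg (2 * n + 2) k * omg (2 * n + 2) (n + 1 - k))
        + (if n % 2 = 1 then
            (3 / 4) * I ((n + 1) / 2) ^ 2 / omg (2 * n + 2) ((n + 1) / 2) ^ 2
          else 0)) := by
  have h2 : (2 * n + 2) / 2 = n + 1 := by omega
  rw [h2]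
  simp only [Finset.Ico_add_one_right_eq_Icc]
  have hfil : ((Finset.Icc 1 n).filter (fun k => 4 * k < 2 * n + 2))
      = (Finset.Icc 1 n).filter (fun k => 2 * k < n + 1) := by
    apply Finset.filter_congr
    intro x _
    constructor <;> intro h <;> omega
  rw [hfil]
  have hif : (if (2 * n + 2) % 4 = 0 then
      (3 / 4) * ((- I ((2 * n + 2) / 4)) ^ 2 - (0 : ℝ) ^ 2)
        / omg (2 * n + 2) ((2 * n + 2) / 4) ^ 2 else 0)
      = (if n % 2 = 1 then
      (3 / 4) * I ((n + 1) / 2) ^ 2 / omg (2 * n + 2) ((n + 1) / 2) ^ 2 else 0) := by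
    by_cases ho : n % 2 = 1
    · have hm : (2 * n + 2) % 4 = 0 := by omega
      have hq : (2 * n + 2) / 4 = (n + 1) / 2 := by omega
      rw [if_pos hm, if_pos ho, hq]
      ring
    · have hm : ¬ (2 * n + 2) % 4 = 0 := by omega
      rw [if_neg hm, if_neg ho]
  rw [hif]
  have hs1 : ∑ k ∈ Finset.Icc 1 n, (3 * I k ^ 2 - (0 : ℝ) ^ 2) / omg (2 * n + 2) k ^ 2
      = 3 * ∑ k ∈ Finset.Icc 1 n, I k ^ 2 / omg (2 * n + 2) k ^ 2 := by
    rw [Finset.mul_sum]; apply Finset.sum_congr rfl; intro k _; ring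
  have hs2 : ∑ k ∈ (Finset.Icc 1 n).filter (fun k => 2 * k < n + 1),
        ((- I k) * (- I (n + 1 - k)) - (0 : ℝ) * (0 : ℝ))
          / (omg (2 * n + 2) k * omg (2 * n + 2) (n + 1 - k))
      = ∑ k ∈ (Finset.Icc 1 n).filter (fun k => 2 * k < n + 1),
        I k * I (n + 1 - k) / (omg (2 * n + 2) k * omg (2 * n + 2) (n + 1 - k)) := by
    apply Finset.sum_congr rfl; intro k _; ring
  rw [hs1, hs2]
  ring

end
end

section
/- For every integer n ≥ 1 the n×n matrix F_n defined by: F_{kk} = 3 if 2k ≠ n+1, F_{kk} = 4 if 2k = n+1, F_{k,l} = 6 if k ≠ l and k + l = n+1, and F_{k,l} = 4 otherwise, has nonzero determinant (F_n is nonsingular). -/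
/-- For every `n ≥ 1` the `n×n` matrix `F_n` with diagonal
entries `3` (but `4` at position `(k,k)` when `2k = n+1`), entries `6` at
off-diagonal positions `(k,l)` with `k + l = n+1`, and `4` elsewhere,
is nonsingular.  (Indices are 1-based: position `(k,l)` with `1 ≤ k, l ≤ n`.) -/
theorem Fn_nonsingular (n : ℕ) (hn : 1 ≤ n) (F : Matrix (Fin n) (Fin n) ℝ)
    (hF : ∀ i j : Fin n, F i j =
      if i = j then
        (if 2 * ((i : ℕ) + 1) = n + 1 then 4 else 3)
      else
        (if (i : ℕ) + 1 + ((j : ℕ) + 1) = n + 1 then 6 else 4)) :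
    F.det ≠ 0 := by
  intro hdet
  obtain ⟨v, hv, hFv⟩ := Matrix.exists_mulVec_eq_zero_iff.mpr hdet
  set s : ℝ := ∑ j, v j with hs
  have key : ∀ i : Fin n,
      4 * s + 2 * v i.rev - v i - (if i = i.rev then v i else 0) = 0 := by
    intro i
    have h := congrFun hFv i
    simp only [Matrix.mulVec, dotProduct, Pi.zero_apply] at h
    have hrw : ∀ j : Fin n, F i j * v j =
        4 * v j + (if j = i.rev then 2 * v j else 0) - (if j = i then v j else 0)
          - (if i = i.rev then (if j = i then v j else 0) else 0) := by
      intro j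
      have hij : ((i:ℕ)+1 + ((j:ℕ)+1) = n+1) ↔ j = i.rev := by
        rw [Fin.ext_iff, Fin.val_rev]; have := i.isLt; have := j.isLt; omega
      have hfix : (2 * ((i:ℕ) + 1) = n + 1) ↔ i = i.rev := by
        rw [Fin.ext_iff, Fin.val_rev]; have := i.isLt; omega
      rw [hF i j]
      by_cases h1 : i = j
      · subst h1
        by_cases h2 : i = i.rev
        · simp [← h2, hfix.mpr h2]; try ring
        · have hc : ¬ (2 * ((i:ℕ) + 1) = n + 1) := fun h => h2 (hfix.mp h)
          simp [hc, h2, fun h => h2 (Eq.symm h)]; try ring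
      · have h1' : ¬ (j = i) := fun h => h1 h.symm
        by_cases h3 : j = i.rev
        · rw [if_neg h1, if_pos (hij.mpr h3), if_pos h3, if_neg h1']
          by_cases h2 : i = i.rev
          · exfalso; exact h1 (by rw [h3, ← h2])
          · simp [h2]; try ring
        · rw [if_neg h1, if_neg (fun h => h3 (hij.mp h)), if_neg h3, if_neg h1']
          simp; try ring
    rw [Finset.sum_congr rfl (fun j _ => hrw j)] at h
    simp only [Finset.sum_sub_distrib, Finset.sum_add_distrib,
      Finset.sum_ite_eq', Finset.mem_univ, if_true, ← Finset.mul_sum] at h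
    rw [← hs] at h
    by_cases h2 : i = i.rev
    · simp only [if_pos h2, Finset.sum_ite_eq', Finset.mem_univ, if_true] at h ⊢
      linarith
    · simp only [if_neg h2, Finset.sum_const_zero] at h ⊢
      linarith
  have hfixuniq : ∀ i j : Fin n, i = i.rev → j = j.rev → i = j := by
    intro i j hi hj
    rw [Fin.ext_iff, Fin.val_rev] at hi
    rw [Fin.ext_iff, Fin.val_rev] at hj
    rw [Fin.ext_iff]
    have := i.isLt; have := j.isLt; omega
  have hnonfix : ∀ i : Fin n, i ≠ i.rev → v i = -4 * s := by
    intro i hi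
    have h1 := key i
    have h2 := key i.rev
    rw [Fin.rev_rev] at h2
    rw [if_neg hi] at h1
    rw [if_neg (fun h : i.rev = i => hi h.symm)] at h2
    linarith
  have hs0 : s = 0 := by
    by_cases hex : ∃ m : Fin n, m = m.rev
    · obtain ⟨m, hm⟩ := hex
      have h1 := key m
      rw [if_pos hm, ← hm] at h1
      linarith
    · push_neg at hex
      have h4 : ∑ j : Fin n, v j = ∑ _j : Fin n, (-4 * s) :=
        Finset.sum_congr rfl fun j _ => hnonfix j (hex j)
      rw [← hs, Finset.sum_const, Finset.card_univ, Fintype.card_fin,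
        nsmul_eq_mul] at h4
      have hn' : (1:ℝ) ≤ (n:ℝ) := by exact_mod_cast hn
      nlinarith
  apply hv
  funext i
  simp only [Pi.zero_apply]
  by_cases hi : i = i.rev
  · have hall : ∀ j : Fin n, j ≠ i → v j = 0 := by
      intro j hj
      have hjr : j ≠ j.rev := fun h => hj (hfixuniq j i h hi)
      rw [hnonfix j hjr, hs0]; ring
    have hsv : s = v i := by
      rw [hs, ← Finset.sum_subset (Finset.subset_univ {i})
        (fun j _ hj => hall j (by simpa using hj))]
      simp
    rw [← hsv, hs0]
  · rw [hnonfix i hi, hs0]; ring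
end
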